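/- Let G be a graph on {1,...,n} and let B be any symmetric n×n real matrix with B_{ii} = 1 for all i, B_{ij} ≥ 1 whenever {i,j} ∈ E(G), and B_{ij} = 0 whenever i ≠ j and {i,j} ∉ E(G). Then the minimum of x^T B x over the standard simplex Δ_n equals 1/α(G). -/
import Mathlib


open Finset Matrix

/-- The stability number: the maximum cardinality of a stable (independent) set. -/
noncomputable def alpha {V : Type*} [Fintype V] (G : SimpleGraph V) : ℕ :=
  sSup {k | ∃ S : Finset V, (∀ i ∈ S, ∀ j ∈ S, ¬ G.Adj i j) ∧ S.card = k}

lemma alpha_bddAbove {n : ℕ} (G : SimpleGraph (Fin n)) :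
    BddAbove {k | ∃ S : Finset (Fin n), (∀ i ∈ S, ∀ j ∈ S, ¬ G.Adj i j) ∧ S.card = k} := by
  refine ⟨n, fun k hk => ?_⟩
  obtain ⟨S, _, rfl⟩ := hk
  simpa using S.card_le_univ

lemma card_le_alpha {n : ℕ} (G : SimpleGraph (Fin n)) {S : Finset (Fin n)}
    (hS : ∀ i ∈ S, ∀ j ∈ S, ¬ G.Adj i j) : S.card ≤ alpha G :=
  le_csSup (alpha_bddAbove G) ⟨S, hS, rfl⟩

lemma alpha_spec {n : ℕ} (hn : 0 < n) (G : SimpleGraph (Fin n)) :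
    ∃ S : Finset (Fin n), (∀ i ∈ S, ∀ j ∈ S, ¬ G.Adj i j) ∧ S.card = alpha G ∧ 1 ≤ alpha G := by
  have hne : {k | ∃ S : Finset (Fin n), (∀ i ∈ S, ∀ j ∈ S, ¬ G.Adj i j) ∧ S.card = k}.Nonempty := by
    refine ⟨1, {⟨0, hn⟩}, ?_, by simp⟩
    intro i hi j hj
    simp only [Finset.mem_singleton] at hi hj
    subst hi; subst hj; exact G.irrefl
  obtain ⟨S, hS, hcard⟩ := Nat.sSup_mem hne (alpha_bddAbove G)
  have h1 : 1 ≤ alpha G := by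
    refine le_csSup (alpha_bddAbove G) ⟨{⟨0, hn⟩}, ?_, by simp⟩
    intro i hi j hj
    simp only [Finset.mem_singleton] at hi hj
    subst hi; subst hj; exact G.irrefl
  exact ⟨S, hS, hcard, h1⟩

/-- Key lower bound, by strong induction on the size of the support of `x`. -/
lemma motzkin_straus_lower {n : ℕ} (G : SimpleGraph (Fin n))
    (B : Matrix (Fin n) (Fin n) ℝ) (hsymm : B.IsSymm)
    (hdiag : ∀ i, B i i = 1)
    (hedge : ∀ i j, G.Adj i j → 1 ≤ B i j)
    (hnonedge : ∀ i j, i ≠ j → ¬ G.Adj i j → B i j = 0)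
    (α : ℝ) (hα1 : 1 ≤ α)
    (hstable : ∀ S : Finset (Fin n), (∀ i ∈ S, ∀ j ∈ S, ¬ G.Adj i j) → (S.card : ℝ) ≤ α) :
    ∀ m : ℕ, ∀ x : Fin n → ℝ, x ∈ stdSimplex ℝ (Fin n) →
      ((univ.filter fun i => x i ≠ 0).card ≤ m) → 1 / α ≤ x ⬝ᵥ (B *ᵥ x) := by
  have hαpos : (0:ℝ) < α := lt_of_lt_of_le one_pos hα1
  intro m
  induction m with
  | zero =>
    intro x hx hcard
    exfalso
    have hempty : (univ.filter fun i => x i ≠ 0) = ∅ := Finset.card_eq_zero.mp (Nat.le_zero.mp hcard)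
    have hzero : ∀ i, x i = 0 := by
      intro i
      by_contra h
      have : i ∈ (univ.filter fun i => x i ≠ 0) := by simp [h]
      simp [hempty] at this
    have := hx.2
    rw [Finset.sum_congr rfl (fun i _ => hzero i)] at this
    simp at this
  | succ m ih =>
    intro x hx hcard
    set s : Finset (Fin n) := univ.filter fun i => x i ≠ 0 with hs
    by_cases hstab : ∀ i ∈ s, ∀ j ∈ s, ¬ G.Adj i j
    · -- support is stable: quadratic form is the sum of squares
      have hq : x ⬝ᵥ (B *ᵥ x) = ∑ i, (x i)^2 := by
        simp only [dotProduct, mulVec]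
        refine Finset.sum_congr rfl (fun i _ => ?_)
        by_cases hxi : x i = 0
        · simp [hxi]
        · have hi : i ∈ s := by simp [hs, hxi]
          have : ∑ j, B i j * x j = x i := by
            rw [Finset.sum_eq_single i]
            · rw [hdiag i, one_mul]
            · intro j _ hji
              by_cases hxj : x j = 0
              · simp [hxj]
              · have hj : j ∈ s := by simp [hs, hxj]
                rw [hnonedge i j (Ne.symm hji) (hstab i hi j hj), zero_mul]
            · intro h; exact absurd (Finset.mem_univ i) h
          rw [this, sq]
      have hsumx : ∑ i ∈ s, x i = 1 := by
        have h0 : ∑ i ∈ s, x i = ∑ i, x i :=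
          Finset.sum_subset (Finset.subset_univ s)
            (fun i _ hi => by by_contra h; exact hi (by simp [hs, h]))
        rw [h0, hx.2]
      have hcs : (1:ℝ) ≤ (s.card : ℝ) * ∑ i ∈ s, (x i)^2 := by
        have := sq_sum_le_card_mul_sum_sq (s := s) (f := x)
        rw [hsumx] at this
        simpa using this
      have hsq : ∑ i ∈ s, (x i)^2 ≤ ∑ i, (x i)^2 :=
        Finset.sum_le_sum_of_subset_of_nonneg (Finset.subset_univ s)
          (fun i _ _ => sq_nonneg _)
      have hcard_le : (s.card : ℝ) ≤ α := hstable s hstab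
      have hsum_nn : (0:ℝ) ≤ ∑ i ∈ s, (x i)^2 :=
        Finset.sum_nonneg (fun i _ => sq_nonneg _)
      have h1 : (1:ℝ) ≤ α * ∑ i, (x i)^2 := by
        calc (1:ℝ) ≤ (s.card : ℝ) * ∑ i ∈ s, (x i)^2 := hcs
          _ ≤ α * ∑ i ∈ s, (x i)^2 := by
              exact mul_le_mul_of_nonneg_right hcard_le hsum_nn
          _ ≤ α * ∑ i, (x i)^2 := by
              exact mul_le_mul_of_nonneg_left hsq (le_of_lt hαpos)
      rw [hq, div_le_iff₀ hαpos]
      linarith [h1]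
    · -- there is an edge inside the support: shift mass
      push_neg at hstab
      obtain ⟨i, hi, j, hj, hadj⟩ := hstab
      have hij : i ≠ j := G.ne_of_adj hadj
      have hxi : 0 < x i := lt_of_le_of_ne (hx.1 i) (by simp [hs] at hi; exact (Ne.symm hi))
      have hxj : 0 < x j := lt_of_le_of_ne (hx.1 j) (by simp [hs] at hj; exact (Ne.symm hj))
      set v : Fin n → ℝ := Pi.single i 1 - Pi.single j 1 with hv
      have hvi : v i = 1 := by simp [hv, Pi.single_apply, hij]
      have hvj : v j = -1 := by simp [hv, Pi.single_apply, hij.symm]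
      have hvk : ∀ k, k ≠ i → k ≠ j → v k = 0 := by
        intro k hki hkj
        simp [hv, Pi.single_apply, hki, hkj]
      set c : ℝ := (B *ᵥ x) i - (B *ᵥ x) j with hc
      set d : ℝ := 2 - 2 * B i j with hd
      have hd0 : d ≤ 0 := by
        have := hedge i j hadj
        simp only [hd]; linarith
      -- dot product computations
      have hdotv : ∀ w : Fin n → ℝ, v ⬝ᵥ w = w i - w j := by
        intro w
        simp [hv, sub_dotProduct, single_dotProduct]
      have hBv : B *ᵥ v = (fun k => B k i) - (fun k => B k j) := by
        rw [hv, mulVec_sub, mulVec_single, mulVec_single]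
        funext k; simp
      have hrow : ∀ a : Fin n, x ⬝ᵥ (fun k => B k a) = (B *ᵥ x) a := by
        intro a
        simp only [dotProduct, mulVec]
        refine Finset.sum_congr rfl (fun k _ => ?_)
        rw [hsymm.apply a k, mul_comm]
      have hxBv : x ⬝ᵥ (B *ᵥ v) = c := by
        rw [hBv, dotProduct_sub, hrow, hrow, hc]
      have hvBx : v ⬝ᵥ (B *ᵥ x) = c := by rw [hdotv, hc]
      have hvBv : v ⬝ᵥ (B *ᵥ v) = d := by
        rw [hBv, hdotv]
        simp only [Pi.sub_apply]
        rw [hdiag i, hdiag j, hsymm.apply i j, hd]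
        ring
      -- choose the shift amount t
      obtain ⟨t, htl, htr, htc, hzero⟩ :
          ∃ t : ℝ, -x i ≤ t ∧ t ≤ x j ∧ 2 * t * c ≤ 0 ∧ (x i + t = 0 ∨ x j - t = 0) := by
        rcases le_or_gt 0 c with h | h
        · refine ⟨-x i, le_refl _, by linarith, ?_, Or.inl (by ring)⟩
          nlinarith
        · refine ⟨x j, by linarith, le_refl _, ?_, Or.inr (by ring)⟩
          nlinarith
      set y : Fin n → ℝ := x + t • v with hy
      have hyi : y i = x i + t := by simp [hy, hvi]
      have hyj : y j = x j - t := by simp [hy, hvj]; ring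
      have hyk : ∀ k, k ≠ i → k ≠ j → y k = x k := by
        intro k hki hkj
        simp [hy, hvk k hki hkj]
      -- quadratic form expansion
      have hqy : y ⬝ᵥ (B *ᵥ y) = x ⬝ᵥ (B *ᵥ x) + 2 * t * c + t^2 * d := by
        rw [hy]
        rw [mulVec_add, mulVec_smul, add_dotProduct, dotProduct_add, dotProduct_add,
          smul_dotProduct, dotProduct_smul]
        rw [hxBv, hvBx, smul_dotProduct, dotProduct_smul, hvBv]
        simp only [smul_eq_mul]
        ring
      have hqle : y ⬝ᵥ (B *ᵥ y) ≤ x ⬝ᵥ (B *ᵥ x) := by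
        rw [hqy]
        nlinarith [sq_nonneg t]
      -- y belongs to the simplex
      have hynn : ∀ k, 0 ≤ y k := by
        intro k
        by_cases hki : k = i
        · subst hki
          rcases hzero with h | h
          · rw [hyi, h]
          · rw [hyi]; linarith
        · by_cases hkj : k = j
          · subst hkj
            rcases hzero with h | h
            · rw [hyj]; linarith
            · rw [hyj, h]
          · rw [hyk k hki hkj]; exact hx.1 k
      have hysum : ∑ k, y k = 1 := by
        have hvsum : ∑ k, v k = 0 := by
          simp [hv, Finset.sum_sub_distrib, Pi.single_apply]
        simp only [hy, Pi.add_apply, Pi.smul_apply, smul_eq_mul]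
        rw [Finset.sum_add_distrib, ← Finset.mul_sum, hvsum, hx.2]
        ring
      have hymem : y ∈ stdSimplex ℝ (Fin n) := ⟨hynn, hysum⟩
      -- support strictly decreases
      have hsubset : (univ.filter fun k => y k ≠ 0) ⊆ s := by
        intro k hk
        simp only [Finset.mem_filter, Finset.mem_univ, true_and] at hk
        simp only [hs, Finset.mem_filter, Finset.mem_univ, true_and]
        by_cases hki : k = i
        · subst hki; exact ne_of_gt hxi
        · by_cases hkj : k = j
          · subst hkj; exact ne_of_gt hxj
          · rwa [hyk k hki hkj] at hk
      have hstrict : (univ.filter fun k => y k ≠ 0) ⊂ s := by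
        refine Finset.ssubset_iff_of_subset hsubset |>.mpr ?_
        rcases hzero with h | h
        · refine ⟨i, hi, ?_⟩
          simp only [Finset.mem_filter, Finset.mem_univ, true_and, not_not]
          rw [hyi]; exact h
        · refine ⟨j, hj, ?_⟩
          simp only [Finset.mem_filter, Finset.mem_univ, true_and, not_not]
          rw [hyj]; exact h
      have hycard : (univ.filter fun k => y k ≠ 0).card ≤ m := by
        have := Finset.card_lt_card hstrict
        omega
      exact le_trans (ih y hymem hycard) hqle

/-- Generalized Motzkin–Straus: for any `B ∈ B(G)`, the minimum of `xᵀBx` over the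
standard simplex equals `1/α(G)`. -/
theorem motzkin_straus_B {n : ℕ} (hn : 0 < n) (G : SimpleGraph (Fin n))
    (B : Matrix (Fin n) (Fin n) ℝ) (hsymm : B.IsSymm)
    (hdiag : ∀ i, B i i = 1)
    (hedge : ∀ i j, G.Adj i j → 1 ≤ B i j)
    (hnonedge : ∀ i j, i ≠ j → ¬ G.Adj i j → B i j = 0) :
    IsLeast {v : ℝ | ∃ x ∈ stdSimplex ℝ (Fin n), v = x ⬝ᵥ (B *ᵥ x)} (1 / (alpha G : ℝ)) := by
  obtain ⟨S, hSstab, hScard, hα1⟩ := alpha_spec hn G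
  have hαpos : (0:ℝ) < (alpha G : ℝ) := by exact_mod_cast hα1
  constructor
  · -- membership: uniform distribution on a maximum stable set
    set α : ℝ := (alpha G : ℝ) with hα
    set x : Fin n → ℝ := fun k => if k ∈ S then α⁻¹ else 0 with hxdef
    have hScard' : (S.card : ℝ) = α := by exact_mod_cast congrArg Nat.cast hScard
    have hSsum : ∑ k, x k = 1 := by
      simp only [hxdef]
      rw [Finset.sum_ite_mem, Finset.univ_inter, Finset.sum_const, nsmul_eq_mul, hScard']
      field_simp
    have hxmem : x ∈ stdSimplex ℝ (Fin n) := by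
      refine ⟨fun k => ?_, hSsum⟩
      simp only [hxdef]
      split
      · positivity
      · exact le_refl 0
    refine ⟨x, hxmem, ?_⟩
    simp only [dotProduct, mulVec]
    have hinner : ∀ k ∈ S, ∑ l, B k l * x l = α⁻¹ := by
      intro k hk
      simp only [hxdef]
      rw [Finset.sum_congr rfl (fun l _ => by rw [mul_ite, mul_zero])]
      rw [Finset.sum_ite_mem, Finset.univ_inter]
      rw [Finset.sum_eq_single k]
      · rw [hdiag k, one_mul]
      · intro l hl hlk
        rw [hnonedge k l (Ne.symm hlk) (hSstab k hk l hl), zero_mul]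
      · intro h; exact absurd hk h
    have hstep : ∑ k, x k * ∑ l, B k l * x l = ∑ k ∈ S, α⁻¹ * α⁻¹ := by
      have h0 : ∑ k, x k * ∑ l, B k l * x l = ∑ k ∈ S, x k * ∑ l, B k l * x l := by
        refine (Finset.sum_subset (Finset.subset_univ S) ?_).symm
        intro k _ hk
        simp [hxdef, hk]
      rw [h0]
      refine Finset.sum_congr rfl (fun k hk => ?_)
      rw [hinner k hk]
      simp [hxdef, hk]
    rw [hstep, Finset.sum_const, nsmul_eq_mul, hScard']
    field_simp
  · -- lower bound
    rintro v ⟨x, hx, rfl⟩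
    exact motzkin_straus_lower G B hsymm hdiag hedge hnonedge (alpha G : ℝ)
      (by exact_mod_cast hα1) (fun S hS => by exact_mod_cast card_le_alpha G hS)
      (univ.filter fun i => x i ≠ 0).card x hx (le_refl _)
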